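/- The set of nonzero complex numbers α for which χ(ψ_α ⊗ ψ_α) < 4 is finite. -/

import Mathlib

open scoped BigOperators Classical

noncomputable section

namespace StabPaper

/-- The space `𝔽₂ⁿ` of length-`n` bitstrings. -/
abbrev F2 (n : ℕ) := Fin n → ZMod 2

/-- `A ⊆ 𝔽₂ⁿ` is a (nonempty) affine linear subspace. -/
def IsAffineSubspace {n : ℕ} (A : Set (F2 n)) : Prop :=
  A.Nonempty ∧ ∀ x ∈ A, ∀ y ∈ A, ∀ z ∈ A, x + y + z ∈ A

/-- `l : 𝔽₂ⁿ → 𝔽₂` is a linear form. -/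
def IsLinearForm {n : ℕ} (l : F2 n → ZMod 2) : Prop :=
  ∀ x y, l (x + y) = l x + l y

/-- `q : 𝔽₂ⁿ → 𝔽₂` is a quadratic form (polynomial of degree at most 2
with vanishing constant term). -/
def IsQuadraticForm {n : ℕ} (q : F2 n → ZMod 2) : Prop :=
  q 0 = 0 ∧ ∀ x y z, q (x + y + z) = q (x + y) + q (x + z) + q (y + z) + q x + q y + q z

/-- A stabilizer state vector on `n` qubits. -/
def IsStabilizerState {n : ℕ} (σ : F2 n → ℂ) : Prop :=
  ∃ (A : Set (F2 n)) (l q : F2 n → ZMod 2),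
    IsAffineSubspace A ∧ IsLinearForm l ∧ IsQuadraticForm q ∧
    ∀ x, σ x = if x ∈ A then Complex.I ^ (l x).val * (-1 : ℂ) ^ (q x).val else 0

/-- A real stabilizer state vector on `n` qubits (the case `l = 0`). -/
def IsRealStabilizerState {n : ℕ} (σ : F2 n → ℂ) : Prop :=
  ∃ (A : Set (F2 n)) (q : F2 n → ZMod 2),
    IsAffineSubspace A ∧ IsQuadraticForm q ∧
    ∀ x, σ x = if x ∈ A then (-1 : ℂ) ^ (q x).val else 0

/-- The stabilizer rank: the least `r` such that `ψ` is a `ℂ`-linear combination of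
`r` stabilizer state vectors. -/
def stabRank {n : ℕ} (ψ : F2 n → ℂ) : ℕ :=
  sInf {r : ℕ | ∃ (c : Fin r → ℂ) (σ : Fin r → (F2 n → ℂ)),
    (∀ i, IsStabilizerState (σ i)) ∧ ψ = ∑ i, c i • σ i}

/-- The real stabilizer rank: the least `r` such that `ψ` is a `ℂ`-linear combination of
`r` real stabilizer state vectors. -/
def realStabRank {n : ℕ} (ψ : F2 n → ℂ) : ℕ :=
  sInf {r : ℕ | ∃ (c : Fin r → ℂ) (σ : Fin r → (F2 n → ℂ)),
    (∀ i, IsRealStabilizerState (σ i)) ∧ ψ = ∑ i, c i • σ i}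

/-- The `n`-fold tensor power of a one-qubit vector `ψ : ℂ²`. -/
def tensorPow (ψ : ZMod 2 → ℂ) (n : ℕ) : F2 n → ℂ := fun x => ∏ i, ψ (x i)

/-- The Euclidean norm on `ℂ^{𝔽₂ⁿ}`. -/
def l2norm {n : ℕ} (φ : F2 n → ℂ) : ℝ := Real.sqrt (∑ x, ‖φ x‖ ^ 2)

/-- The δ-approximate stabilizer rank. -/
def approxStabRank {n : ℕ} (δ : ℝ) (ψ : F2 n → ℂ) : ℕ :=
  sInf {r : ℕ | ∃ φ : F2 n → ℂ, φ ≠ 0 ∧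
    l2norm (fun x => ((l2norm φ : ℝ) : ℂ)⁻¹ * φ x - ((l2norm ψ : ℝ) : ℂ)⁻¹ * ψ x) < δ ∧
    stabRank φ = r}

/-- The one-qubit vector `a·e₀ + b·e₁ ∈ ℂ²`. -/
def qubit (a b : ℂ) : ZMod 2 → ℂ := fun x => if x = 0 then a else b

/-- A nonzero `ψ ∈ ℂ²` is a one-qubit stabilizer state vector iff it is proportional to
one of `e₀, e₁, e₀+e₁, e₀−e₁, e₀+i·e₁, e₀−i·e₁`. -/
def IsQubitStabVec (ψ : ZMod 2 → ℂ) : Prop :=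
  ∃ c : ℂ, c ≠ 0 ∧ (ψ = c • qubit 1 0 ∨ ψ = c • qubit 0 1 ∨ ψ = c • qubit 1 1 ∨
    ψ = c • qubit 1 (-1) ∨ ψ = c • qubit 1 Complex.I ∨ ψ = c • qubit 1 (-Complex.I))

/-- The `n`-th generic stabilizer rank `χ_n`. -/
def genStabRank (n : ℕ) : ℕ :=
  sSup {r : ℕ | ∃ ψ : ZMod 2 → ℂ, ψ ≠ 0 ∧ stabRank (tensorPow ψ n) = r}

/-- The `n`-th generic real stabilizer rank `χ_nℝ`. -/
def genRealStabRank (n : ℕ) : ℕ :=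
  sSup {r : ℕ | ∃ ψ : ZMod 2 → ℂ, ψ ≠ 0 ∧ realStabRank (tensorPow ψ n) = r}


/-- The two-qubit state `ψ_α` with `ψ_α(00) = 1`, `ψ_α(01) = ψ_α(10) = α`, `ψ_α(11) = 0`. -/
def psiAlpha (α : ℂ) : F2 2 → ℂ := fun x =>
  if x 0 = 0 ∧ x 1 = 0 then 1 else if x 0 = 1 ∧ x 1 = 1 then 0 else α

/-- The tensor product of two two-qubit states, as a four-qubit state. -/
def tensor2 (φ ρ : F2 2 → ℂ) : F2 4 → ℂ := fun x =>
  φ (fun i => x (Fin.castAdd 2 i)) * ρ (fun j => x (Fin.natAdd 2 j))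

def V0 : F2 4 → ℂ := fun x => if x 0 = 0 ∧ x 1 = 0 ∧ x 2 = 0 ∧ x 3 = 0 then 1 else 0
def V1 : F2 4 → ℂ := fun x =>
  if (x 0 = 0 ∧ x 1 = 0 ∧ x 2 ≠ x 3) ∨ (x 0 ≠ x 1 ∧ x 2 = 0 ∧ x 3 = 0) then 1 else 0
def V2 : F2 4 → ℂ := fun x => if x 0 ≠ x 1 ∧ x 2 ≠ x 3 then 1 else 0
lemma two_cases (a : ZMod 2) : a = 0 ∨ a = 1 := by revert a; decide

lemma stab_val_ne_zero (k m : ℕ) : Complex.I ^ k * (-1 : ℂ) ^ m ≠ 0 :=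
  mul_ne_zero (pow_ne_zero _ Complex.I_ne_zero) (pow_ne_zero _ (by norm_num))

lemma stab_mem_pi {n : ℕ} {σ : F2 n → ℂ} (h : IsStabilizerState σ) (x : F2 n) :
    σ x ∈ ({0, 1, -1, Complex.I, -Complex.I} : Set ℂ) := by
  obtain ⟨A, l, q, -, -, -, hσ⟩ := h
  rw [hσ x]
  by_cases hx : x ∈ A
  · rw [if_pos hx]
    rcases two_cases (l x) with hl | hl <;> rcases two_cases (q x) with hq | hq <;>
      simp [hl, hq, show (1 : ZMod 2).val = 1 from rfl]
  · simp [hx]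

lemma stabSet_finite (n : ℕ) : {σ : F2 n → ℂ | IsStabilizerState σ}.Finite := by
  have h : {σ : F2 n → ℂ | IsStabilizerState σ} ⊆
      Set.pi Set.univ (fun _ : F2 n => ({0, 1, -1, Complex.I, -Complex.I} : Set ℂ)) := by
    intro σ hσ x _
    exact stab_mem_pi hσ x
  exact Set.Finite.subset (Set.Finite.pi (fun _ => by
    apply Set.toFinite)) h

-- the delta function is a stabilizer state
lemma isStab_delta {n : ℕ} (y : F2 n) :
    IsStabilizerState (fun x => if x = y then (1 : ℂ) else 0) := by
  have hyy : y + y = 0 := by funext i; exact CharTwo.add_self_eq_zero (y i)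
  refine ⟨{y}, 0, 0, ⟨⟨y, rfl⟩, ?_⟩, fun a b => by simp, ⟨rfl, fun a b c => by simp⟩, ?_⟩
  · intro a ha b hb c hc
    simp only [Set.mem_singleton_iff] at ha hb hc ⊢
    subst ha; subst hb; subst hc
    rw [hyy, zero_add]
  · intro x
    simp [Set.mem_singleton_iff]


-- specific points
def e1 : F2 4 := ![0,0,0,1]
def e2 : F2 4 := ![0,0,1,0]
def e3 : F2 4 := ![0,1,0,0]
def p0 : F2 4 := ![0,0,0,0]
def p2 : F2 4 := ![0,1,0,1]
def w7 : F2 4 := ![0,1,1,1]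

lemma esum : e1 + e2 + e3 = w7 := by
  funext i; fin_cases i <;> decide

lemma V0e1 : V0 e1 = 0 := by norm_num [V0, e1] <;> decide
lemma V1e1 : V1 e1 = 1 := by norm_num [V1, e1] <;> decide
lemma V2e1 : V2 e1 = 0 := by norm_num [V2, e1]
lemma V0e2 : V0 e2 = 0 := by norm_num [V0, e2] <;> decide
lemma V1e2 : V1 e2 = 1 := by norm_num [V1, e2] <;> decide
lemma V2e2 : V2 e2 = 0 := by norm_num [V2, e2]
lemma V0e3 : V0 e3 = 0 := by norm_num [V0, e3]
lemma V1e3 : V1 e3 = 1 := by norm_num [V1, e3] <;> decide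
lemma V2e3 : V2 e3 = 0 := by norm_num [V2, e3] <;> decide
lemma V0p0 : V0 p0 = 1 := by norm_num [V0, p0] <;> decide
lemma V1p0 : V1 p0 = 0 := by norm_num [V1, p0] <;> decide
lemma V2p0 : V2 p0 = 0 := by norm_num [V2, p0]
lemma V0p2 : V0 p2 = 0 := by norm_num [V0, p2]
lemma V1p2 : V1 p2 = 0 := by norm_num [V1, p2] <;> decide
lemma V2p2 : V2 p2 = 1 := by norm_num [V2, p2] <;> decide
lemma V0w7 : V0 w7 = 0 := by norm_num [V0, w7]
lemma V1w7 : V1 w7 = 0 := by norm_num [V1, w7] <;> decide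
lemma V2w7 : V2 w7 = 0 := by norm_num [V2, w7] <;> decide

open Submodule Module

lemma li_V : LinearIndependent ℂ ![V0, V1, V2] := by
  rw [Fintype.linearIndependent_iff]
  intro g hg
  have h0 := congrFun hg p0
  have h1 := congrFun hg e1
  have h2 := congrFun hg p2
  simp only [Fin.sum_univ_three, Matrix.cons_val_zero, Matrix.cons_val_one, Matrix.head_cons,
    Matrix.cons_val_two, Matrix.tail_cons, Pi.add_apply, Pi.smul_apply, smul_eq_mul,
    Pi.zero_apply, V0p0, V1p0, V2p0, V0e1, V1e1, V2e1, V0p2, V1p2, V2p2] at h0 h1 h2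
  intro i
  fin_cases i <;> simp_all

lemma rangeV : Set.range ![V0, V1, V2] = {V0, V1, V2} := by
  ext f
  simp [Matrix.range_cons, Matrix.range_empty]
  tauto

lemma finrank_W : finrank ℂ (span ℂ ({V0, V1, V2} : Set (F2 4 → ℂ))) = 3 := by
  rw [← rangeV, finrank_span_eq_card li_V]
  simp

lemma V1_not_mem_U : V1 ∉ span ℂ ({V0, V2} : Set (F2 4 → ℂ)) := by
  rw [Submodule.mem_span_pair]
  rintro ⟨a, b, hab⟩
  have := congrFun hab e1
  simp only [Pi.add_apply, Pi.smul_apply, smul_eq_mul, V0e1, V2e1, V1e1] at this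
  simp at this

-- any stabilizer state in span {V0,V1,V2} lies in span {V0,V2}
lemma stab_in_W {σ : F2 4 → ℂ} (hσ : IsStabilizerState σ)
    (hmem : σ ∈ span ℂ ({V0, V1, V2} : Set (F2 4 → ℂ))) :
    σ ∈ span ℂ ({V0, V2} : Set (F2 4 → ℂ)) := by
  rw [show ({V0, V1, V2} : Set (F2 4 → ℂ)) = insert V1 {V0, V2} by
    ext; simp; tauto] at hmem
  rw [Submodule.mem_span_insert] at hmem
  obtain ⟨b, z, hz, hσz⟩ := hmem
  have hb : b = 0 := by
    by_contra hb
    obtain ⟨A, l, q, hA, hl, hq, hval⟩ := hσ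
    rw [Submodule.mem_span_pair] at hz
    obtain ⟨a, c, hac⟩ := hz
    -- σ x = b * V1 x + a * V0 x + c * V2 x
    have hev : ∀ x : F2 4, σ x = b * V1 x + (a * V0 x + c * V2 x) := by
      intro x
      rw [hσz]
      simp [← hac]
    have hmemA : ∀ x : F2 4, σ x ≠ 0 → x ∈ A := by
      intro x hx
      by_contra hxA
      rw [hval x, if_neg hxA] at hx
      exact hx rfl
    have he1 : e1 ∈ A := hmemA e1 (by rw [hev e1, V0e1, V1e1, V2e1]; simpa using hb)
    have he2 : e2 ∈ A := hmemA e2 (by rw [hev e2, V0e2, V1e2, V2e2]; simpa using hb)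
    have he3 : e3 ∈ A := hmemA e3 (by rw [hev e3, V0e3, V1e3, V2e3]; simpa using hb)
    have hw : w7 ∈ A := esum ▸ hA.2 e1 he1 e2 he2 e3 he3
    have : σ w7 = 0 := by rw [hev w7, V0w7, V1w7, V2w7]; ring
    rw [hval w7, if_pos hw] at this
    exact stab_val_ne_zero _ _ this
  rw [hσz, hb]
  simpa using hz

-- Lagrange interpolation through three points of the quadratic curve
lemma interp {M : Type*} [AddCommGroup M] [Module ℂ M] (V : Submodule ℂ M)
    (u0 u1 u2 : M) {a b c : ℂ} (hab : a ≠ b) (hac : a ≠ c) (hbc : b ≠ c)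
    (ha : u0 + a • u1 + (a * a) • u2 ∈ V) (hb : u0 + b • u1 + (b * b) • u2 ∈ V)
    (hc : u0 + c • u1 + (c * c) • u2 ∈ V) :
    u0 ∈ V ∧ u1 ∈ V ∧ u2 ∈ V := by
  have hab' : a - b ≠ 0 := sub_ne_zero.mpr hab
  have hac' : a - c ≠ 0 := sub_ne_zero.mpr hac
  have hbc' : b - c ≠ 0 := sub_ne_zero.mpr hbc
  set pa := u0 + a • u1 + (a * a) • u2 with hpa
  set pb := u0 + b • u1 + (b * b) • u2 with hpb
  set pc := u0 + c • u1 + (c * c) • u2 with hpc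
  have key2 : ((a - b) * (a - c) * (b - c)) • u2 = (a - c) • (pa - pb) - (a - b) • (pa - pc) := by
    rw [hpa, hpb, hpc]; module
  have hu2 : u2 ∈ V := by
    have hk : (a - b) * (a - c) * (b - c) ≠ 0 := mul_ne_zero (mul_ne_zero hab' hac') hbc'
    have : ((a - b) * (a - c) * (b - c)) • u2 ∈ V := by
      rw [key2]; exact V.sub_mem (V.smul_mem _ (V.sub_mem ha hb)) (V.smul_mem _ (V.sub_mem ha hc))
    have := V.smul_mem ((a - b) * (a - c) * (b - c))⁻¹ this
    rwa [inv_smul_smul₀ hk] at this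
  have key1 : (a - b) • u1 = (pa - pb) - ((a*a) - (b*b)) • u2 := by
    rw [hpa, hpb]; module
  have hu1 : u1 ∈ V := by
    have : (a - b) • u1 ∈ V := by
      rw [key1]; exact V.sub_mem (V.sub_mem ha hb) (V.smul_mem _ hu2)
    have := V.smul_mem (a - b)⁻¹ this
    rwa [inv_smul_smul₀ hab'] at this
  have hu0 : u0 ∈ V := by
    have key0 : u0 = pa - a • u1 - (a * a) • u2 := by rw [hpa]; module
    rw [key0]
    exact V.sub_mem (V.sub_mem ha (V.smul_mem _ hu1)) (V.smul_mem _ hu2)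
  exact ⟨hu0, hu1, hu2⟩

-- no three stabilizer states span a space containing V0, V1, V2
lemma no_three {s1 s2 s3 : F2 4 → ℂ} (h1 : IsStabilizerState s1)
    (h2 : IsStabilizerState s2) (h3 : IsStabilizerState s3)
    (hV0 : V0 ∈ span ℂ ({s1, s2, s3} : Set (F2 4 → ℂ)))
    (hV1 : V1 ∈ span ℂ ({s1, s2, s3} : Set (F2 4 → ℂ)))
    (hV2 : V2 ∈ span ℂ ({s1, s2, s3} : Set (F2 4 → ℂ))) : False := by
  set V : Submodule ℂ (F2 4 → ℂ) := span ℂ ({s1, s2, s3} : Set (F2 4 → ℂ)) with hVdef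
  set W : Submodule ℂ (F2 4 → ℂ) := span ℂ ({V0, V1, V2} : Set (F2 4 → ℂ)) with hWdef
  have hWV : W ≤ V := by
    rw [hWdef, Submodule.span_le]
    rintro f (rfl | rfl | rfl) <;> assumption
  have hVrank : finrank ℂ V ≤ 3 := by
    have : finrank ℂ V ≤ ({s1, s2, s3} : Finset (F2 4 → ℂ)).card := by
      have := finrank_span_finset_le_card (R := ℂ) ({s1, s2, s3} : Finset (F2 4 → ℂ))
      rw [Finset.coe_insert, Finset.coe_insert, Finset.coe_singleton] at this
      exact this
    calc finrank ℂ V ≤ _ := this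
      _ ≤ 3 := by
        apply le_trans (Finset.card_insert_le _ _)
        simp [Finset.card_insert_le]
        apply lt_of_le_of_lt (Finset.card_insert_le _ _)
        simp
  have hVW : V = W := by
    refine (Submodule.eq_of_le_of_finrank_le hWV ?_).symm
    have hw3 : finrank ℂ W = 3 := by rw [hWdef]; exact finrank_W
    omega
  have hs : ∀ s ∈ ({s1, s2, s3} : Set (F2 4 → ℂ)), s ∈ span ℂ ({V0, V2} : Set (F2 4 → ℂ)) := by
    rintro s hs
    have hsW : s ∈ W := hVW ▸ Submodule.subset_span hs
    rcases hs with rfl | rfl | rfl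
    exacts [stab_in_W h1 hsW, stab_in_W h2 hsW, stab_in_W h3 hsW]
  have hVU : V ≤ span ℂ ({V0, V2} : Set (F2 4 → ℂ)) := by
    rw [hVdef, Submodule.span_le]; exact hs
  exact V1_not_mem_U (hVU hV1)


lemma tensor2_eq' (α : ℂ) :
    tensor2 (psiAlpha α) (psiAlpha α) = V0 + α • V1 + (α * α) • V2 := by
  funext x
  have e0 : Fin.castAdd 2 (0 : Fin 2) = (0 : Fin 4) := rfl
  have ee1 : Fin.castAdd 2 (1 : Fin 2) = (1 : Fin 4) := rfl
  have ee2 : Fin.natAdd 2 (0 : Fin 2) = (2 : Fin 4) := rfl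
  have ee3 : Fin.natAdd 2 (1 : Fin 2) = (3 : Fin 4) := rfl
  simp only [tensor2, psiAlpha, Pi.add_apply, Pi.smul_apply, smul_eq_mul, e0, ee1, ee2, ee3]
  rcases two_cases (x 0) with h0 | h0 <;> rcases two_cases (x 1) with h1 | h1 <;>
    rcases two_cases (x 2) with h2 | h2 <;> rcases two_cases (x 3) with h3 | h3 <;>
    simp [V0, V1, V2, h0, h1, h2, h3]

lemma Bfin {s1 s2 s3 : F2 4 → ℂ} (h1 : IsStabilizerState s1)
    (h2 : IsStabilizerState s2) (h3 : IsStabilizerState s3) :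
    {α : ℂ | tensor2 (psiAlpha α) (psiAlpha α) ∈
      span ℂ ({s1, s2, s3} : Set (F2 4 → ℂ))}.Finite := by
  by_contra hinf
  replace hinf : Set.Infinite _ := hinf
  obtain ⟨t, hts, htc⟩ := hinf.exists_subset_card_eq 3
  obtain ⟨a, b, c, hab, hac, hbc, rfl⟩ := Finset.card_eq_three.mp htc
  have ha := hts (by simp : a ∈ ({a,b,c} : Finset ℂ))
  have hb := hts (by simp : b ∈ ({a,b,c} : Finset ℂ))
  have hc := hts (by simp : c ∈ ({a,b,c} : Finset ℂ))
  simp only [Set.mem_setOf_eq, tensor2_eq'] at ha hb hc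
  obtain ⟨h0, hh1, hh2⟩ := interp _ V0 V1 V2 hab hac hbc ha hb hc
  exact no_three h1 h2 h3 h0 hh1 hh2


lemma decompSet_nonempty {n : ℕ} (ψ : F2 n → ℂ) :
    {r : ℕ | ∃ (c : Fin r → ℂ) (σ : Fin r → (F2 n → ℂ)),
      (∀ i, IsStabilizerState (σ i)) ∧ ψ = ∑ i, c i • σ i}.Nonempty := by
  set N := Fintype.card (F2 n) with hN
  set e : Fin N ≃ F2 n := (Fintype.equivFin (F2 n)).symm with he
  refine ⟨N, fun i => ψ (e i), fun i => fun x => if x = e i then 1 else 0,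
    fun i => isStab_delta (e i), ?_⟩
  have : (∑ i : Fin N, (fun x => ψ (e i) • if x = e i then (1:ℂ) else 0))
      = ∑ y : F2 n, (fun x => ψ y • if x = y then (1:ℂ) else 0) :=
    Equiv.sum_comp e (fun y => (fun x => ψ y • if x = y then (1:ℂ) else 0))
  funext x
  calc ψ x = (∑ y : F2 n, (fun x => ψ y • if x = y then (1:ℂ) else 0)) x := by
        rw [Finset.sum_apply]
        simp [smul_eq_mul, mul_ite, mul_one, mul_zero]
    _ = (∑ i : Fin N, (fun x => ψ (e i) • if x = e i then (1:ℂ) else 0)) x := by rw [this]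
    _ = _ := by rw [Finset.sum_apply]; simp

lemma span_of_decomp {n : ℕ} {ψ : F2 n → ℂ} {r : ℕ} (hr : r < 4)
    (c : Fin r → ℂ) (σ : Fin r → (F2 n → ℂ)) (hs : ∀ i, IsStabilizerState (σ i))
    (he : ψ = ∑ i, c i • σ i) :
    ∃ t1 t2 t3 : F2 n → ℂ, IsStabilizerState t1 ∧ IsStabilizerState t2 ∧ IsStabilizerState t3 ∧
      ψ ∈ span ℂ ({t1, t2, t3} : Set (F2 n → ℂ)) := by
  set δ : F2 n → ℂ := fun x => if x = 0 then 1 else 0 with hδ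
  have hδs : IsStabilizerState δ := isStab_delta 0
  interval_cases r
  · exact ⟨δ, δ, δ, hδs, hδs, hδs, by
      rw [he]; simp⟩
  · refine ⟨σ 0, δ, δ, hs 0, hδs, hδs, ?_⟩
    rw [he, Fin.sum_univ_one]
    exact Submodule.smul_mem _ _ (Submodule.subset_span (by simp))
  · refine ⟨σ 0, σ 1, δ, hs 0, hs 1, hδs, ?_⟩
    rw [he, Fin.sum_univ_two]
    exact Submodule.add_mem _
      (Submodule.smul_mem _ _ (Submodule.subset_span (by simp)))
      (Submodule.smul_mem _ _ (Submodule.subset_span (by simp)))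
  · refine ⟨σ 0, σ 1, σ 2, hs 0, hs 1, hs 2, ?_⟩
    rw [he, Fin.sum_univ_three]
    exact Submodule.add_mem _ (Submodule.add_mem _
      (Submodule.smul_mem _ _ (Submodule.subset_span (by simp)))
      (Submodule.smul_mem _ _ (Submodule.subset_span (by simp))))
      (Submodule.smul_mem _ _ (Submodule.subset_span (by simp)))

/-- The set of nonzero `α ∈ ℂ` with `χ(ψ_α ⊗ ψ_α) < 4` is finite. -/
theorem psiAlpha_submultiplicative_finite :
    {α : ℂ | α ≠ 0 ∧ stabRank (tensor2 (psiAlpha α) (psiAlpha α)) < 4}.Finite := by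
  set S3 : Set ((F2 4 → ℂ) × (F2 4 → ℂ) × (F2 4 → ℂ)) :=
    {t | IsStabilizerState t.1 ∧ IsStabilizerState t.2.1 ∧ IsStabilizerState t.2.2} with hS3
  have hS3fin : S3.Finite := by
    have h := stabSet_finite 4
    apply Set.Finite.subset ((h.prod (h.prod h)))
    rintro ⟨a, b, c⟩ ⟨ha, hb, hc⟩
    exact ⟨ha, hb, hc⟩
  apply Set.Finite.subset (Set.Finite.biUnion hS3fin
    (fun t ht => Bfin (s1 := t.1) (s2 := t.2.1) (s3 := t.2.2) ht.1 ht.2.1 ht.2.2))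
  rintro α ⟨-, hlt⟩
  have hmem : stabRank (tensor2 (psiAlpha α) (psiAlpha α)) ∈
      {r : ℕ | ∃ (c : Fin r → ℂ) (σ : Fin r → (F2 4 → ℂ)),
        (∀ i, IsStabilizerState (σ i)) ∧ tensor2 (psiAlpha α) (psiAlpha α) = ∑ i, c i • σ i} :=
    Nat.sInf_mem (decompSet_nonempty _)
  obtain ⟨c, σ, hs, he⟩ := hmem
  obtain ⟨t1, t2, t3, h1, h2, h3, hsp⟩ := span_of_decomp hlt c σ hs he
  refine Set.mem_iUnion₂.mpr ⟨(t1, t2, t3), ⟨h1, h2, h3⟩, hsp⟩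


end StabPaper
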